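/- Assume n0 > 5f0. If the detection condition (with window w and threshold n0 − 2f0) holds at receiver j1 at time t1 and at receiver j2 at time t2, where t1 ≤ t2 (j1 and j2 may coincide), then either t2 − t1 ≤ w + δd or t2 − t1 ≥ ε − δd − w; i.e., the gap t2 − t1 never lies in the open interval (w + δd, ε − δd − w). -/
import Mathlib


/-- Timing core of the paper's Lemma 2: the separation of two satisfactions of the
pulse-detection condition (window `w`, threshold `n0 - 2*f0`) never lies in the open
interval `(w + δd, ε - δd - w)`. -/
theorem stmt_1 {J : Type*} [Nonempty J]
    (n0 f0 : ℕ) (ε δd w : ℝ) (hε : 0 ≤ ε) (hδd : 0 ≤ δd) (hw : 0 ≤ w)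
    (hn : n0 > 5 * f0)
    (F : Finset (Fin n0)) (hF : F.card ≤ f0)
    (p : Fin n0 → ℕ → ℝ)
    (hmono : ∀ i ∉ F, StrictMono (p i))
    (hsep : ∀ i ∉ F, ∀ k : ℕ, ε ≤ p i (k + 1) - p i k)
    (R : Fin n0 → J → Set ℝ)
    (hsound : ∀ i ∉ F, ∀ j : J, ∀ r ∈ R i j,
      ∃ k : ℕ, r ∈ Set.Icc (p i k) (p i k + δd))
    (j1 j2 : J) (t1 t2 : ℝ) (hle : t1 ≤ t2)
    (h1 : ∃ D : Finset (Fin n0), n0 - 2 * f0 ≤ D.card ∧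
      ∀ i ∈ D, (R i j1 ∩ Set.Icc (t1 - w) t1).Nonempty)
    (h2 : ∃ D : Finset (Fin n0), n0 - 2 * f0 ≤ D.card ∧
      ∀ i ∈ D, (R i j2 ∩ Set.Icc (t2 - w) t2).Nonempty) :
    t2 - t1 ≤ w + δd ∨ ε - δd - w ≤ t2 - t1 := by
  obtain ⟨D1, hD1c, hD1⟩ := h1
  obtain ⟨D2, hD2c, hD2⟩ := h2
  have hunion : (D1 ∪ D2).card ≤ n0 := by
    simpa using Finset.card_le_univ (D1 ∪ D2)
  have hint := Finset.card_union_add_card_inter D1 D2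
  have hsd : (D1 ∩ D2).card - F.card ≤ ((D1 ∩ D2) \ F).card :=
    Finset.le_card_sdiff F (D1 ∩ D2)
  have hpos : 0 < ((D1 ∩ D2) \ F).card := by omega
  obtain ⟨i, hi⟩ := Finset.card_pos.mp hpos
  rw [Finset.mem_sdiff, Finset.mem_inter] at hi
  obtain ⟨⟨hi1, hi2⟩, hiF⟩ := hi
  obtain ⟨r1, hr1R, hr1lo, hr1hi⟩ := hD1 i hi1
  obtain ⟨r2, hr2R, hr2lo, hr2hi⟩ := hD2 i hi2
  obtain ⟨k1, hk1lo, hk1hi⟩ := hsound i hiF j1 r1 hr1R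
  obtain ⟨k2, hk2lo, hk2hi⟩ := hsound i hiF j2 r2 hr2R
  rcases le_or_gt k2 k1 with hk | hk
  · left
    have hp : p i k2 ≤ p i k1 := (hmono i hiF).monotone hk
    linarith
  · right
    have hp : p i (k1 + 1) ≤ p i k2 := (hmono i hiF).monotone hk
    have := hsep i hiF k1
    linarith
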